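/- There exist constants C1, C2 > 0 depending only on c and σ with the following property: for every real γ with 0 < γ < 4 and all constants 0 < c1 ≤ c2 < ∞, there exists a constant D depending only on γ, c1, c2, c, σ such that for every integer d ≥ D and every integer n with c1·d^γ ≤ n ≤ c2·d^γ, the population Mendelson complexity satisfies C1 · n^(−1/2) ≤ ε_n² ≤ C2 · n^(−1/2). -/

import Mathlib

open Real Filter

/-- Distinct eigenvalues (up to constants) of the NTK on the sphere `S^d`:
`ν_d(k) = d^d · k^(k−2) · (k+d)^(−(k+d+1)) · (k² + k·d + d)`. -/
noncomputable def nuNT (d k : ℕ) : ℝ :=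
  (d : ℝ) ^ (d : ℝ) * (k : ℝ) ^ ((k : ℝ) - 2) *
    ((k : ℝ) + (d : ℝ)) ^ (-((k : ℝ) + (d : ℝ) + 1)) *
    ((k : ℝ) ^ 2 + (k : ℝ) * (d : ℝ) + (d : ℝ))

/-- Dimension of the space of spherical harmonics of degree `k` on `S^d ⊆ ℝ^(d+1)`. -/
def Nsph (d k : ℕ) : ℕ :=
  if k = 0 then 1
  else (k + d).choose k - (if 2 ≤ k then (k + d - 2).choose (k - 2) else 0)

/-- `λ_d(0) = 1` and `λ_d(k) = ν_d(k)` for `k ≥ 1`. -/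
noncomputable def lamNT (d k : ℕ) : ℝ := if k = 0 then 1 else nuNT d k

lemma fact_low (n : ℕ) (hn : n ≠ 0) :
    Real.sqrt π * (Real.sqrt (2*n) * ((n:ℝ)/Real.exp 1)^n) ≤ n.factorial := by
  obtain ⟨m, rfl⟩ := Nat.exists_eq_succ_of_ne_zero hn
  have h1 : Real.sqrt π ≤ Stirling.stirlingSeq (m+1) :=
    Stirling.stirlingSeq'_antitone.le_of_tendsto
      (Stirling.tendsto_stirlingSeq_sqrt_pi.comp (tendsto_add_atTop_nat 1)) m
  have hd : 0 < Real.sqrt (2*(m+1:ℕ)) * (((m+1:ℕ):ℝ)/Real.exp 1)^(m+1) := by positivity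
  have := mul_le_mul_of_nonneg_right h1 hd.le
  rw [Stirling.stirlingSeq, div_mul_cancel₀] at this
  · exact_mod_cast this
  · exact hd.ne'

lemma fact_up (n : ℕ) (hn : n ≠ 0) :
    (n.factorial : ℝ) ≤ Real.exp 1 * Real.sqrt n * ((n:ℝ)/Real.exp 1)^n := by
  obtain ⟨m, rfl⟩ := Nat.exists_eq_succ_of_ne_zero hn
  have h1 : Stirling.stirlingSeq (m+1) ≤ Real.exp 1 / Real.sqrt 2 := by
    have := Stirling.stirlingSeq'_antitone (Nat.zero_le m)
    simpa [Stirling.stirlingSeq_one] using this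
  have hd : 0 < Real.sqrt (2*(m+1:ℕ)) * (((m+1:ℕ):ℝ)/Real.exp 1)^(m+1) := by positivity
  have := mul_le_mul_of_nonneg_right h1 hd.le
  rw [Stirling.stirlingSeq, div_mul_cancel₀ _ hd.ne'] at this
  refine this.trans (le_of_eq ?_)
  rw [show (2*((m+1:ℕ):ℝ)) = 2 * ((m+1:ℕ):ℝ) by ring, Real.sqrt_mul (by norm_num)]
  field_simp

lemma choose_mul_le (k d : ℕ) (hk : k ≠ 0) (hd : d ≠ 0) :
    ((k+d).choose k : ℝ) * (2*π*Real.sqrt k*Real.sqrt d) * ((k:ℝ)^k * (d:ℝ)^d) ≤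
      Real.exp 1 * Real.sqrt ((k:ℝ)+d) * ((k:ℝ)+d)^(k+d) := by
  have key : ((k+d).choose k : ℝ) * ((k.factorial : ℝ) * (d.factorial : ℝ)) = ((k+d).factorial : ℝ) := by
    have := Nat.choose_mul_factorial_mul_factorial (Nat.le_add_right k d)
    rw [Nat.add_sub_cancel_left] at this
    exact_mod_cast (by rw [← this]; ring)
  have hprod : (Real.sqrt π * (Real.sqrt (2*k) * ((k:ℝ)/Real.exp 1)^k)) *
      (Real.sqrt π * (Real.sqrt (2*d) * ((d:ℝ)/Real.exp 1)^d)) ≤ (k.factorial : ℝ) * d.factorial :=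
    mul_le_mul (fact_low k hk) (fact_low d hd) (by positivity) (Nat.cast_nonneg _)
  have h1 : ((k+d).choose k : ℝ) * ((Real.sqrt π * (Real.sqrt (2*k) * ((k:ℝ)/Real.exp 1)^k)) *
      (Real.sqrt π * (Real.sqrt (2*d) * ((d:ℝ)/Real.exp 1)^d))) ≤
      Real.exp 1 * Real.sqrt ((k+d:ℕ)) * (((k+d:ℕ):ℝ)/Real.exp 1)^(k+d) :=
    le_trans (mul_le_mul_of_nonneg_left hprod (Nat.cast_nonneg _))
      (le_of_le_of_eq (le_of_eq key) rfl |>.trans (fact_up (k+d) (by omega)))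
  have hsqrtpi : Real.sqrt π * Real.sqrt π = π := Real.mul_self_sqrt Real.pi_pos.le
  have h2k : Real.sqrt (2*(k:ℝ)) = Real.sqrt 2 * Real.sqrt k := Real.sqrt_mul (by norm_num) _
  have h2d : Real.sqrt (2*(d:ℝ)) = Real.sqrt 2 * Real.sqrt d := Real.sqrt_mul (by norm_num) _
  have h22 : Real.sqrt 2 * Real.sqrt 2 = 2 := Real.mul_self_sqrt (by norm_num)
  have he : (0:ℝ) < Real.exp 1 := Real.exp_pos 1
  have hcast : ((k+d:ℕ):ℝ) = (k:ℝ)+d := by push_cast; ring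
  have hekd : (((k+d:ℕ):ℝ)/Real.exp 1)^(k+d) = ((k:ℝ)+d)^(k+d) / ((Real.exp 1)^k * (Real.exp 1)^d) := by
    rw [hcast, div_pow, pow_add, pow_add]
  have hek : ((k:ℝ)/Real.exp 1)^k = (k:ℝ)^k / (Real.exp 1)^k := div_pow _ _ _
  have hed : ((d:ℝ)/Real.exp 1)^d = (d:ℝ)^d / (Real.exp 1)^d := div_pow _ _ _
  rw [h2k, h2d, hekd, hek, hed, hcast] at h1
  have hepos : (0:ℝ) < (Real.exp 1)^k * (Real.exp 1)^d := by positivity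
  have h3 := mul_le_mul_of_nonneg_right h1 hepos.le
  refine le_trans (le_of_eq ?_) (h3.trans (le_of_eq ?_))
  · field_simp
    linear_combination (-2*((k+d).choose k : ℝ)) * hsqrtpi +
      (-(((k+d).choose k : ℝ) * (Real.sqrt π * Real.sqrt π))) * h22
  · field_simp

lemma Nsph_le (d k : ℕ) (hd : 1 ≤ d) (hk : 1 ≤ k) : Nsph d k ≤ 2 * (k+d-1).choose k := by
  unfold Nsph
  rw [if_neg (by omega)]
  by_cases h2 : 2 ≤ k
  · obtain ⟨m, rfl⟩ : ∃ m, k = m + 2 := ⟨k-2, by omega⟩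
    rw [if_pos h2]
    have e1 : (m+2+d).choose (m+2) = (m+d+1).choose (m+1) + (m+d+1).choose (m+2) := by
      rw [show m+2+d = (m+d+1)+1 by omega]
      exact Nat.choose_succ_succ _ _
    have e2 : (m+d+1).choose (m+1) = (m+d).choose m + (m+d).choose (m+1) :=
      Nat.choose_succ_succ _ _
    have e3 : (m+d).choose (m+1) ≤ (m+d+1).choose (m+2) := by
      have h := Nat.choose_succ_succ (m+d) (m+1)
      simp only [Nat.succ_eq_add_one] at h
      rw [show m+1+1 = m+2 by omega] at h
      omega
    have h4 : m+2+d-2 = m+d := by omega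
    have h5 : m+2-2 = m := by omega
    rw [h4, h5]
    have h6 : m+2+d-1 = m+d+1 := by omega
    rw [h6]
    omega
  · obtain rfl : k = 1 := by omega
    rw [if_neg h2]
    have h1 : (1+d).choose 1 = 1+d := Nat.choose_one_right _
    have h2' : (1+d-1).choose 1 = d := by
      rw [show 1+d-1 = d by omega]; exact Nat.choose_one_right _
    omega

lemma choose_id (d k : ℕ) (hd : 1 ≤ d) : (k+d-1).choose k * (k+d) = (k+d).choose k * d := by
  have := Nat.choose_mul_succ_eq (k+d-1) k
  rw [show k+d-1+1 = k+d by omega] at this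
  rw [this, show k+d-k = d by omega]

lemma nuNT_eq (d k : ℕ) (hd : 1 ≤ d) (hk : 1 ≤ k) :
    nuNT d k = (d:ℝ)^(d:ℕ) * (k:ℝ)^(k:ℕ) * ((k:ℝ)^2 + k*d + d) /
      ((k:ℝ)^2 * ((k:ℝ)+(d:ℝ))^(k+d+1:ℕ)) := by
  have hK : (0:ℝ) < k := by exact_mod_cast hk
  have hS : (0:ℝ) < (k:ℝ)+(d:ℝ) := by positivity
  unfold nuNT
  rw [show ((k:ℝ) - 2) = (k:ℝ) - ((2:ℕ):ℝ) by norm_num]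
  rw [Real.rpow_sub hK, Real.rpow_natCast, Real.rpow_natCast, Real.rpow_natCast]
  rw [show -((k:ℝ) + (d:ℝ) + 1) = -(((k+d+1:ℕ):ℝ)) by push_cast; ring]
  rw [Real.rpow_neg hS.le, Real.rpow_natCast]
  field_simp

lemma tele (x : ℝ) (hx : 1 ≤ x) :
    ((x+1) * Real.sqrt (x+1))⁻¹ ≤ 2 * (1/Real.sqrt x - 1/Real.sqrt (x+1)) := by
  set a := Real.sqrt x with ha
  set b := Real.sqrt (x+1) with hb
  have ha2 : a^2 = x := Real.sq_sqrt (by linarith)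
  have hb2 : b^2 = x+1 := Real.sq_sqrt (by linarith)
  have ha0 : 1 ≤ a := by rw [ha, show (1:ℝ) = Real.sqrt 1 by simp]; exact Real.sqrt_le_sqrt hx
  have hb0 : 0 < b := Real.sqrt_pos.mpr (by linarith)
  have ha0' : 0 < a := by linarith
  have hab : a ≤ b := Real.sqrt_le_sqrt (by linarith)
  have h1 : (b-a)*(b+a) = 1 := by nlinarith
  have e1 : a^2*b ≤ b^2*b := by nlinarith
  have e2 : a*b^2 ≤ b*b^2 := by nlinarith
  have key : a * b ≤ 2*(b-a)*(b^2*b) := by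
    have h2 : a*b*(a+b) ≤ 2*(b^2*b) := by nlinarith [e1, e2]
    have h3 : (2*(b-a)*(b^2*b))*(a+b) = 2*(b^2*b) := by linear_combination (2*b^2*b)*h1
    exact le_of_mul_le_mul_right (h2.trans_eq h3.symm) (by linarith)
  have hrhs : 2 * (1/a - 1/b) = 2*(b-a)/(a*b) := by field_simp
  have hlhs : (x+1)*b = b^2*b := by rw [hb2]
  rw [hrhs, hlhs, inv_eq_one_div, div_le_div_iff₀ (by positivity) (by positivity)]
  linarith [key]

lemma sum_tail_le (m : ℕ) :
    ∑ i ∈ Finset.range m, (((i+1:ℕ):ℝ) * Real.sqrt ((i+1:ℕ)))⁻¹ ≤ 3 := by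
  have claim : ∀ m : ℕ, 1 ≤ m →
      ∑ i ∈ Finset.range m, (((i+1:ℕ):ℝ) * Real.sqrt ((i+1:ℕ)))⁻¹ ≤ 3 - 2/Real.sqrt m := by
    intro m hm
    induction m, hm using Nat.le_induction with
    | base => norm_num
    | succ m hm ih =>
      rw [Finset.sum_range_succ]
      have hx : (1:ℝ) ≤ (m:ℝ) := by exact_mod_cast hm
      have ht := tele (m:ℝ) hx
      push_cast at ih ⊢
      set Ssum := ∑ x ∈ Finset.range m, (((x:ℝ) + 1) * Real.sqrt ((x:ℝ)+1))⁻¹ with hS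
      ring_nf at ht ih ⊢
      linarith [ht, ih]
  rcases Nat.eq_zero_or_pos m with rfl | hm
  · simp
  · have := claim m hm
    have h0 : 0 ≤ 2/Real.sqrt m := by positivity
    linarith

lemma summable_base : Summable (fun i : ℕ => ((i:ℝ) * Real.sqrt i)⁻¹) := by
  have heq : (fun i : ℕ => ((i:ℝ) * Real.sqrt i)⁻¹) = fun i : ℕ => (i:ℝ) ^ (-(3/2) : ℝ) := by
    funext i
    rcases Nat.eq_zero_or_pos i with rfl | hi
    · simp [Real.zero_rpow (show (-(3/2):ℝ) ≠ 0 by norm_num)]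
    · have hi0 : (0:ℝ) < i := by exact_mod_cast hi
      rw [Real.rpow_neg hi0.le, show (3/2:ℝ) = 1 + 1/2 by norm_num, Real.rpow_add hi0,
        Real.rpow_one, ← Real.sqrt_eq_rpow]
  rw [heq]
  exact Real.summable_nat_rpow.mpr (by norm_num)

lemma term_le (d k : ℕ) (hd : 1 ≤ d) (hk : 1 ≤ k) :
    (Nsph d k : ℝ) * nuNT d k ≤ 2 * ((k:ℝ) * Real.sqrt k)⁻¹ := by
  have hK : (1:ℝ) ≤ (k:ℝ) := by exact_mod_cast hk
  have hD : (1:ℝ) ≤ (d:ℝ) := by exact_mod_cast hd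
  have hK0 : (0:ℝ) < k := by linarith
  have hD0 : (0:ℝ) < d := by linarith
  have hS0 : (0:ℝ) < (k:ℝ)+(d:ℝ) := by linarith
  set K : ℝ := (k:ℝ) with hKdef
  set D : ℝ := (d:ℝ) with hDdef
  set S : ℝ := K + D with hSdef
  set Q : ℝ := K^2 + K*D + D with hQdef
  set C : ℝ := ((k+d).choose k : ℝ) with hCdef
  have hB0 : (0:ℝ) < K^2 * S^(k+d+1:ℕ) := by positivity
  have hKK0 : (0:ℝ) < K * Real.sqrt K := by positivity
  rw [nuNT_eq d k hd hk, ← mul_div_assoc, show (2:ℝ) * (K * Real.sqrt K)⁻¹ = 2 / (K * Real.sqrt K) by ring,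
    div_le_div_iff₀ hB0 hKK0]
  have hP0 : (0:ℝ) < S * (2*π*Real.sqrt K*Real.sqrt D) := by positivity
  apply le_of_mul_le_mul_right _ hP0
  -- step0 : N * S ≤ 2 * (C * D)
  have step0 : (Nsph d k : ℝ) * S ≤ 2 * (C * D) := by
    have h1 : (Nsph d k : ℝ) ≤ 2 * ((k+d-1).choose k : ℝ) := by
      exact_mod_cast Nsph_le d k hd hk
    have h2 : ((k+d-1).choose k : ℝ) * S = C * D := by
      have := choose_id d k hd
      have hcast := congrArg (Nat.cast (R:=ℝ)) this
      push_cast at hcast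
      rw [hCdef, hSdef, hKdef, hDdef]
      linarith [hcast]
    calc (Nsph d k : ℝ) * S ≤ (2 * ((k+d-1).choose k : ℝ)) * S :=
          mul_le_mul_of_nonneg_right h1 (by positivity)
      _ = 2 * (((k+d-1).choose k : ℝ) * S) := by ring
      _ = 2 * (C * D) := by rw [h2]
  have hC := choose_mul_le k d (by omega) (by omega)
  have hQle : Q ≤ 2*K*S := by
    rw [hQdef, hSdef]; nlinarith
  have heπ : Real.exp 1 ≤ π := by
    have h1 := Real.exp_one_lt_d9
    have h2 := Real.pi_gt_d6
    linarith
  have hsq : Real.sqrt D ≤ Real.sqrt S := Real.sqrt_le_sqrt (by rw [hSdef]; linarith)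
  have hend : Real.exp 1 * Real.sqrt S * D ≤ π * S * Real.sqrt D := by
    have hD' : Real.sqrt D * Real.sqrt D = D := Real.mul_self_sqrt hD0.le
    have hS' : Real.sqrt S * Real.sqrt S = S := Real.mul_self_sqrt hS0.le
    have h1 : Real.exp 1 * Real.sqrt D ≤ π * Real.sqrt S :=
      mul_le_mul heπ hsq (Real.sqrt_nonneg _) Real.pi_pos.le
    calc Real.exp 1 * Real.sqrt S * D = (Real.exp 1 * Real.sqrt D) * (Real.sqrt S * Real.sqrt D) := by
          linear_combination (-(Real.exp 1 * Real.sqrt S)) * hD'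
      _ ≤ (π * Real.sqrt S) * (Real.sqrt S * Real.sqrt D) :=
          mul_le_mul_of_nonneg_right h1 (by positivity)
      _ = π * S * Real.sqrt D := by linear_combination (π * Real.sqrt D) * hS'
  have hpow : S^(k+d+1:ℕ) = S^(k+d)*S := pow_succ _ _
  calc (Nsph d k : ℝ) * (D^(d:ℕ) * K^(k:ℕ) * Q) * (K * Real.sqrt K) * (S * (2*π*Real.sqrt K*Real.sqrt D))
      = ((Nsph d k : ℝ) * S) * ((2*π*Real.sqrt K*Real.sqrt D) * (K^(k:ℕ) * D^(d:ℕ))) * (Q * (K * Real.sqrt K)) := by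
        ring
    _ ≤ (2 * (C * D)) * ((2*π*Real.sqrt K*Real.sqrt D) * (K^(k:ℕ) * D^(d:ℕ))) * (Q * (K * Real.sqrt K)) := by
        apply mul_le_mul_of_nonneg_right (mul_le_mul_of_nonneg_right step0 (by positivity)) (by positivity)
    _ = (C * (2*π*Real.sqrt K*Real.sqrt D) * (K^(k:ℕ) * D^(d:ℕ))) * (2 * D * Q * (K * Real.sqrt K)) := by
        ring
    _ ≤ (Real.exp 1 * Real.sqrt S * S^(k+d)) * (2 * D * Q * (K * Real.sqrt K)) := by
        apply mul_le_mul_of_nonneg_right hC (by positivity)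
    _ ≤ (Real.exp 1 * Real.sqrt S * S^(k+d)) * (2 * D * (2*K*S) * (K * Real.sqrt K)) := by
        apply mul_le_mul_of_nonneg_left (by
          apply mul_le_mul_of_nonneg_right (mul_le_mul_of_nonneg_left hQle (by positivity)) (by positivity))
          (by positivity)
    _ = (Real.exp 1 * Real.sqrt S * D) * (4 * S^(k+d) * S * K^2 * Real.sqrt K) := by ring
    _ ≤ (π * S * Real.sqrt D) * (4 * S^(k+d) * S * K^2 * Real.sqrt K) :=
        mul_le_mul_of_nonneg_right hend (by positivity)
    _ = 2 * (K^2 * S^(k+d+1:ℕ)) * (S * (2*π*Real.sqrt K*Real.sqrt D)) := by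
        rw [hpow]; ring

lemma exp_two_le : Real.exp 2 ≤ 15/2 := by
  have h := Real.exp_one_lt_d9
  have h2 : Real.exp 2 = Real.exp 1 * Real.exp 1 := by
    rw [← Real.exp_add]; norm_num
  nlinarith [Real.exp_pos 1]

lemma Nsph_two (d : ℕ) (hd : 1 ≤ d) : (d:ℝ)^2/2 ≤ (Nsph d 2 : ℝ) := by
  have hval : Nsph d 2 = (2+d).choose 2 - 1 := by
    unfold Nsph
    rw [if_neg (by omega), if_pos (by omega), show 2+d-2 = d by omega]
    simp
  have hdvd : 2 ∣ (2+d)*(2+d-1) := by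
    rw [show 2+d-1 = 1+d by omega, Nat.mul_comm]
    have h := Nat.even_mul_succ_self (1+d)
    rw [show (1+d)+1 = 2+d by omega] at h
    exact h.two_dvd
  have h2 : 2 * ((2+d).choose 2) = (2+d)*(2+d-1) := by
    rw [Nat.choose_two_right]
    exact Nat.mul_div_cancel' hdvd
  have hn : d^2 ≤ 2 * Nsph d 2 := by
    rw [hval]
    have hch : 1 ≤ (2+d).choose 2 := Nat.choose_pos (by omega)
    have h3 : (2+d)*(2+d-1) = d^2+3*d+2 := by
      rw [show 2+d-1 = 1+d by omega]; ring
    omega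
  have := (Nat.cast_le (α := ℝ)).mpr hn
  push_cast at this
  linarith

lemma pow_two_add (d : ℕ) (hd : 1 ≤ d) : ((2:ℝ)+(d:ℝ))^(d:ℕ) ≤ Real.exp 2 * (d:ℝ)^(d:ℕ) := by
  have hD0 : (0:ℝ) < d := by exact_mod_cast hd
  have h1 : (2:ℝ)+(d:ℝ) = (d:ℝ)*(1+2/(d:ℝ)) := by field_simp; ring
  rw [h1, mul_pow]
  have h2 : (1:ℝ)+2/(d:ℝ) ≤ Real.exp (2/(d:ℝ)) := by
    have := Real.add_one_le_exp (2/(d:ℝ)); linarith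
  have h3 : ((1:ℝ)+2/(d:ℝ))^(d:ℕ) ≤ (Real.exp (2/(d:ℝ)))^(d:ℕ) :=
    pow_le_pow_left₀ (by positivity) h2 d
  have h4 : (Real.exp (2/(d:ℝ)))^(d:ℕ) = Real.exp 2 := by
    rw [← Real.exp_nat_mul]
    congr 1
    field_simp
  calc (d:ℝ)^(d:ℕ) * ((1:ℝ)+2/(d:ℝ))^(d:ℕ) ≤ (d:ℝ)^(d:ℕ) * (Real.exp (2/(d:ℝ)))^(d:ℕ) :=
        mul_le_mul_of_nonneg_left h3 (by positivity)
    _ = Real.exp 2 * (d:ℝ)^(d:ℕ) := by rw [h4]; ring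

lemma lower2 (d : ℕ) (hd : 2 ≤ d) : (1:ℝ)/60 ≤ (Nsph d 2 : ℝ) * nuNT d 2 := by
  have hd1 : 1 ≤ d := by omega
  have hD0 : (0:ℝ) < d := by exact_mod_cast hd1
  have hD2 : (2:ℝ) ≤ (d:ℝ) := by exact_mod_cast hd
  set D : ℝ := (d:ℝ) with hDdef
  have hnu : nuNT d 2 = D^(d:ℕ) * 4 * (4+3*D) / (4 * ((2:ℝ)+D)^(2+d+1:ℕ)) := by
    rw [nuNT_eq d 2 hd1 (by omega), hDdef]
    norm_num
    ring_nf
  have hpowsplit : ((2:ℝ)+D)^(2+d+1:ℕ) = ((2:ℝ)+D)^(d:ℕ) * ((2:ℝ)+D)^3 := by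
    rw [show (2+d+1 : ℕ) = d + 3 by omega, pow_add]
  have hpow := pow_two_add d hd1
  have hNs := Nsph_two d hd1
  have hnupos : (0:ℝ) < 4 * ((2:ℝ)+D)^(2+d+1:ℕ) := by positivity
  rw [hnu, ← mul_div_assoc, le_div_iff₀ hnupos]
  -- goal : 1/60 * (4 * (2+D)^(2+d+1)) ≤ Nsph d 2 * (D^d * 4 * (4+3D))
  calc (1:ℝ)/60 * (4 * ((2:ℝ)+D)^(2+d+1:ℕ))
      = (1:ℝ)/15 * (((2:ℝ)+D)^(d:ℕ) * ((2:ℝ)+D)^3) := by rw [hpowsplit]; ring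
    _ ≤ (1:ℝ)/15 * ((Real.exp 2 * D^(d:ℕ)) * ((2:ℝ)+D)^3) := by
        apply mul_le_mul_of_nonneg_left (mul_le_mul_of_nonneg_right hpow (by positivity)) (by norm_num)
    _ ≤ (1:ℝ)/15 * (((15/2) * D^(d:ℕ)) * ((2:ℝ)+D)^3) := by
        apply mul_le_mul_of_nonneg_left (mul_le_mul_of_nonneg_right
          (mul_le_mul_of_nonneg_right exp_two_le (by positivity)) (by positivity)) (by norm_num)
    _ = D^(d:ℕ) * (((2:ℝ)+D)^3 / 2) := by ring
    _ ≤ D^(d:ℕ) * ((D^2/2) * (4*(4+3*D))) := by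
        apply mul_le_mul_of_nonneg_left _ (by positivity)
        nlinarith [hD2]
    _ ≤ D^(d:ℕ) * ((Nsph d 2 : ℝ) * (4*(4+3*D))) := by
        apply mul_le_mul_of_nonneg_left (mul_le_mul_of_nonneg_right hNs (by nlinarith)) (by positivity)
    _ = (Nsph d 2 : ℝ) * (D^(d:ℕ) * 4 * (4+3*D)) := by ring

lemma nuNT_nonneg (d k : ℕ) : 0 ≤ nuNT d k := by
  unfold nuNT
  have h1 : (0:ℝ) ≤ (k:ℝ)^2 + (k:ℝ)*(d:ℝ) + (d:ℝ) := by positivity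
  positivity

lemma lamNT_nonneg (d k : ℕ) : 0 ≤ lamNT d k := by
  unfold lamNT
  split
  · norm_num
  · exact nuNT_nonneg d k

/-- Constants C1, C2 > 0 depending only on c and σ: for every real γ with 0 < γ < 4 and all
0 < c1 ≤ c2 < ∞, for all large d and all integers n with c1·d^γ ≤ n ≤ c2·d^γ, the population
Mendelson complexity ε_n (the unique positive solution of
Σ_{k=0}^∞ N(d,k)·min{λ_d(k), ε²} = n·ε⁴/(c²σ²)) satisfies
C1·n^(−1/2) ≤ ε_n² ≤ C2·n^(−1/2). -/
theorem mendelson_complexity_bounds_small_gamma (c σ : ℝ) (hc : 0 < c) (hσ : 0 < σ) :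
    ∃ C1 C2 : ℝ, 0 < C1 ∧ 0 < C2 ∧
      ∀ γ : ℝ, 0 < γ → γ < 4 →
        ∀ c1 c2 : ℝ, 0 < c1 → c1 ≤ c2 →
          ∃ D : ℕ, ∀ d : ℕ, D ≤ d → ∀ n : ℕ,
            c1 * (d : ℝ) ^ γ ≤ (n : ℝ) → (n : ℝ) ≤ c2 * (d : ℝ) ^ γ →
            ∀ ε : ℝ, 0 < ε →
              (∑' k : ℕ, (Nsph d k : ℝ) * min (lamNT d k) (ε ^ 2)) =
                (n : ℝ) * ε ^ 4 / (c ^ 2 * σ ^ 2) →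
              C1 * (n : ℝ) ^ (-(1 / 2 : ℝ)) ≤ ε ^ 2 ∧
              ε ^ 2 ≤ C2 * (n : ℝ) ^ (-(1 / 2 : ℝ)) := by
  refine ⟨c*σ/8, 3*c*σ, by positivity, by positivity, ?_⟩
  intro γ hγ0 hγ4 c1 c2 hc1 hc12
  have hc2 : 0 < c2 := lt_of_lt_of_le hc1 hc12
  have hexp : 0 < 2 - γ/2 := by linarith
  have htend : Tendsto (fun d : ℕ => (d:ℝ)^(2-γ/2)) atTop atTop :=
    (tendsto_rpow_atTop hexp).comp tendsto_natCast_atTop_atTop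
  obtain ⟨D, hD⟩ := eventually_atTop.mp
    ((htend.eventually_ge_atTop (Real.sqrt c2 / (4*c*σ))).and (eventually_ge_atTop 2))
  refine ⟨D, ?_⟩
  intro d hdD n hn1 hn2 ε hε hsum
  obtain ⟨hDrpow, hd2⟩ := hD d hdD
  have hd1 : 1 ≤ d := by omega
  have hDpos : (0:ℝ) < d := by exact_mod_cast Nat.lt_of_lt_of_le Nat.zero_lt_two hd2
  have hnpos : (0:ℝ) < n := lt_of_lt_of_le (by positivity) hn1
  have hT : (0:ℝ) < c^2*σ^2 := by positivity
  set E : ℝ := ε^2 with hEdef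
  set f : ℕ → ℝ := fun k => (Nsph d k : ℝ) * min (lamNT d k) E with hfdef
  clear_value E f
  have hE0 : 0 < E := by rw [hEdef]; positivity
  have f_nonneg : ∀ k, 0 ≤ f k := by
    intro k
    rw [hfdef]
    exact mul_nonneg (Nat.cast_nonneg _) (le_min (lamNT_nonneg d k) hE0.le)
  have hf_succ : ∀ k : ℕ, f (k+1) ≤ 2 * (((k+1:ℕ):ℝ) * Real.sqrt ((k+1:ℕ)))⁻¹ := by
    intro k
    have h1 : f (k+1) ≤ (Nsph d (k+1) : ℝ) * nuNT d (k+1) := by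
      rw [hfdef]
      have : lamNT d (k+1) = nuNT d (k+1) := by unfold lamNT; rw [if_neg (by omega)]
      exact mul_le_mul_of_nonneg_left (le_trans (min_le_left _ _) (le_of_eq this))
        (Nat.cast_nonneg _)
    exact h1.trans (term_le d (k+1) hd1 (by omega))
  have hf0 : f 0 ≤ 1 := by
    rw [hfdef]
    simp only [Nsph, lamNT, if_pos rfl]
    simpa using min_le_left (1:ℝ) E
  have hsummable : Summable f := by
    refine (summable_nat_add_iff 1).mp ?_
    refine Summable.of_nonneg_of_le (fun k => f_nonneg _) hf_succ ?_
    exact (((summable_nat_add_iff 1).mpr summable_base)).mul_left 2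
  have htsum_le : ∑' k, f k ≤ 7 := by
    apply Real.tsum_le_of_sum_range_le f_nonneg
    intro m
    cases m with
    | zero => simp
    | succ m =>
      rw [Finset.sum_range_succ']
      have h1 : ∑ i ∈ Finset.range m, f (i+1) ≤
          ∑ i ∈ Finset.range m, 2 * (((i+1:ℕ):ℝ) * Real.sqrt ((i+1:ℕ)))⁻¹ :=
        Finset.sum_le_sum (fun i _ => hf_succ i)
      have h2 : ∑ i ∈ Finset.range m, 2 * (((i+1:ℕ):ℝ) * Real.sqrt ((i+1:ℕ)))⁻¹ =
          2 * ∑ i ∈ Finset.range m, (((i+1:ℕ):ℝ) * Real.sqrt ((i+1:ℕ)))⁻¹ := by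
        rw [Finset.mul_sum]
      have h3 := sum_tail_le m
      linarith
  have heq : ∑' k, f k = (n:ℝ) * E^2 / (c^2*σ^2) := by
    rw [hsum, hEdef]; ring
  have hrn : (n:ℝ)^(-(1/2):ℝ) = (Real.sqrt n)⁻¹ := by
    rw [Real.rpow_neg hnpos.le, Real.sqrt_eq_rpow]
  have hsqn_pos : 0 < Real.sqrt n := Real.sqrt_pos.mpr hnpos
  constructor
  · -- lower bound
    have hf2 : f 2 ≤ ∑' k, f k := Summable.le_tsum hsummable 2 (fun j _ => f_nonneg j)
    have hlam2 : lamNT d 2 = nuNT d 2 := by unfold lamNT; rw [if_neg (by omega)]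
    rcases le_total (nuNT d 2) E with hcase | hcase
    · -- E large: f 2 = Nsph * nuNT ≥ 1/60
      have hf2val : f 2 = (Nsph d 2 : ℝ) * nuNT d 2 := by
        rw [hfdef]; simp only [hlam2, min_eq_left hcase]
      have h60 : (1:ℝ)/60 ≤ (n:ℝ) * E^2 / (c^2*σ^2) := by
        rw [← heq]
        exact le_trans (lower2 d hd2) (by rw [← hf2val]; exact hf2)
      have hE2 : (c*σ/8)^2/n ≤ E^2 := by
        rw [le_div_iff₀ hT] at h60
        rw [div_le_iff₀ hnpos]
        linarith [h60, hT]
      have hfin := Real.sqrt_le_sqrt hE2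
      rw [Real.sqrt_sq hE0.le, Real.sqrt_div (by positivity), Real.sqrt_sq (by positivity)] at hfin
      rw [hrn, ← div_eq_mul_inv]
      exact hfin
    · -- E small: f 2 = Nsph * E ≥ (d²/2) E
      have hf2val : f 2 = (Nsph d 2 : ℝ) * E := by
        rw [hfdef]; simp only [hlam2, min_eq_right hcase]
      have h1 : ((d:ℝ)^2/2) * E ≤ (n:ℝ) * E^2 / (c^2*σ^2) := by
        rw [← heq]
        refine le_trans ?_ hf2
        rw [hf2val]
        exact mul_le_mul_of_nonneg_right (Nsph_two d hd1) hE0.le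
      rw [le_div_iff₀ hT] at h1
      have h2 : c^2*σ^2*(d:ℝ)^2/(2*n) ≤ E := by
        rw [div_le_iff₀ (by positivity)]
        have h3 : (c^2*σ^2*(d:ℝ)^2) * E ≤ (E*(2*(n:ℝ))) * E := by linarith [h1]
        exact le_of_mul_le_mul_right h3 hE0
      -- √n ≤ 4cσ d²
      have hsqn : Real.sqrt n ≤ Real.sqrt c2 * (d:ℝ)^(γ/2 : ℝ) := by
        have h4 : Real.sqrt n ≤ Real.sqrt (c2 * (d:ℝ)^γ) := Real.sqrt_le_sqrt hn2
        have h4b : Real.sqrt (c2 * (d:ℝ)^γ) = Real.sqrt c2 * Real.sqrt ((d:ℝ)^γ) :=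
          Real.sqrt_mul hc2.le _
        have h4c : Real.sqrt ((d:ℝ)^γ) = (d:ℝ)^(γ/2:ℝ) := by
          rw [Real.sqrt_eq_rpow, ← Real.rpow_mul hDpos.le]
          congr 1
          ring
        rw [h4b, h4c] at h4
        exact h4
      have hsq2 : Real.sqrt n ≤ 4*c*σ*(d:ℝ)^2 := by
        have h5 : Real.sqrt c2 ≤ 4*c*σ * (d:ℝ)^(2-γ/2 : ℝ) := by
          rw [div_le_iff₀ (by positivity)] at hDrpow
          linarith [hDrpow]
        have h6 : Real.sqrt c2 * (d:ℝ)^(γ/2:ℝ) ≤ (4*c*σ * (d:ℝ)^(2-γ/2:ℝ)) * (d:ℝ)^(γ/2:ℝ) :=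
          mul_le_mul_of_nonneg_right h5 (by positivity)
        have h7 : (d:ℝ)^(2-γ/2:ℝ) * (d:ℝ)^(γ/2:ℝ) = (d:ℝ)^2 := by
          rw [← Real.rpow_add hDpos]
          norm_num
        calc Real.sqrt n ≤ Real.sqrt c2 * (d:ℝ)^(γ/2:ℝ) := hsqn
          _ ≤ (4*c*σ * (d:ℝ)^(2-γ/2:ℝ)) * (d:ℝ)^(γ/2:ℝ) := h6
          _ = 4*c*σ*(d:ℝ)^2 := by rw [mul_assoc, h7]
      have hnn : Real.sqrt n * Real.sqrt n = n := Real.mul_self_sqrt hnpos.le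
      have h8 : c*σ/8 * (Real.sqrt n)⁻¹ ≤ c^2*σ^2*(d:ℝ)^2/(2*n) := by
        rw [← div_eq_mul_inv, div_le_div_iff₀ hsqn_pos (by positivity)]
        have h9 := mul_le_mul_of_nonneg_left hsq2 (show (0:ℝ) ≤ c*σ/4*Real.sqrt n by positivity)
        have h10 : c*σ/4*Real.sqrt n*Real.sqrt n = c*σ/4*(n:ℝ) := by
          rw [mul_assoc, hnn]
        have h11 : c*σ/4*Real.sqrt n*(4*c*σ*(d:ℝ)^2) = c^2*σ^2*(d:ℝ)^2*Real.sqrt n := by ring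
        linarith [h9, h10, h11]
      rw [hrn]
      linarith [h8, h2]
  · -- upper bound
    have h := htsum_le
    rw [heq, div_le_iff₀ hT] at h
    have hE2 : E^2 ≤ (3*c*σ)^2/n := by
      rw [le_div_iff₀ hnpos]
      linarith [h, hT]
    have hfin := Real.sqrt_le_sqrt hE2
    rw [Real.sqrt_sq hE0.le, Real.sqrt_div (by positivity), Real.sqrt_sq (by positivity)] at hfin
    rw [hrn, ← div_eq_mul_inv]
    exact hfin
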